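/- arXiv:1801.05910 — 2 statements merged into one kernel-verified Lean document; each statement's English description precedes it below -/
import Mathlib

section
/- For all m ≥ 0, jN_{m+1} + jN_m = 3·JN_{m+2}, where JN and jN are the dual third-order Jacobsthal and Jacobsthal-Lucas quaternions. -/
def J3 : ℕ → ℤ
  | 0 => 0
  | 1 => 1
  | 2 => 1
  | n + 3 => J3 (n + 2) + J3 (n + 1) + 2 * J3 n

def j3 : ℕ → ℤ
  | 0 => 2
  | 1 => 1
  | 2 => 5
  | n + 3 => j3 (n + 2) + j3 (n + 1) + 2 * j3 n

def V3 (n : ℕ) : ℤ := if n % 3 = 0 then 2 else if n % 3 = 1 then -3 else 1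
noncomputable section

abbrev DualQ := TrivSqZeroExt ℝ (Fin 3 → ℝ)

def qi : DualQ := TrivSqZeroExt.inr (Pi.single 0 1)
def qj : DualQ := TrivSqZeroExt.inr (Pi.single 1 1)
def qk : DualQ := TrivSqZeroExt.inr (Pi.single 2 1)

def JN (m : ℕ) : DualQ :=
  (J3 m : DualQ) + (J3 (m + 1) : DualQ) * qi + (J3 (m + 2) : DualQ) * qj + (J3 (m + 3) : DualQ) * qk

def jN (m : ℕ) : DualQ :=
  (j3 m : DualQ) + (j3 (m + 1) : DualQ) * qi + (j3 (m + 2) : DualQ) * qj + (j3 (m + 3) : DualQ) * qk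

def conjJN (m : ℕ) : DualQ :=
  (J3 m : DualQ) - (J3 (m + 1) : DualQ) * qi - (J3 (m + 2) : DualQ) * qj - (J3 (m + 3) : DualQ) * qk

def conjjN (m : ℕ) : DualQ :=
  (j3 m : DualQ) - (j3 (m + 1) : DualQ) * qi - (j3 (m + 2) : DualQ) * qj - (j3 (m + 3) : DualQ) * qk

def VN (m : ℕ) : DualQ :=
  (V3 m : DualQ) + (V3 (m + 1) : DualQ) * qi + (V3 (m + 2) : DualQ) * qj + (V3 (m + 3) : DualQ) * qk


lemma key : ∀ m : ℕ, j3 (m + 1) + j3 m = 3 * J3 (m + 2) := by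
  intro m
  induction m using Nat.strong_induction_on with
  | _ m ih =>
    match m with
    | 0 => decide
    | 1 => decide
    | 2 => decide
    | n + 3 =>
      have h0 := ih n (by omega)
      have h1 := ih (n+1) (by omega)
      have h2 := ih (n+2) (by omega)
      show j3 (n+4) + j3 (n+3) = 3 * J3 (n+5)
      have e1 : j3 (n+4) = j3 (n+3) + j3 (n+2) + 2 * j3 (n+1) := rfl
      have e2 : j3 (n+3) = j3 (n+2) + j3 (n+1) + 2 * j3 n := rfl
      have e3 : J3 (n+5) = J3 (n+4) + J3 (n+3) + 2 * J3 (n+2) := rfl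
      simp only [show n+1+1 = n+2 from rfl, show n+1+2 = n+3 from rfl,
        show n+2+1 = n+3 from rfl, show n+2+2 = n+4 from rfl] at h1 h2
      omega

lemma keyD : ∀ m : ℕ, ((j3 (m+1) : DualQ)) + (j3 m : DualQ) = 3 * (J3 (m+2) : DualQ) := by
  intro m
  have h : ((j3 (m+1) + j3 m : ℤ) : DualQ) = ((3 * J3 (m+2) : ℤ) : DualQ) := by rw [key m]
  push_cast at h
  exact h

theorem stmt_15 : ∀ m : ℕ, jN (m + 1) + jN m = 3 * JN (m + 2) := by
  intro m
  simp only [jN, JN]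
  have h0 := keyD m
  have h1 := keyD (m+1)
  have h2 := keyD (m+2)
  have h3 := keyD (m+3)
  simp only [show ∀ k, m + 1 + k = m + (1 + k) from fun k => by ring,
    show ∀ k, m + 2 + k = m + (2 + k) from fun k => by ring] at *
  linear_combination h0 + qi * h1 + qj * h2 + qk * h3
end
end

section
/- For all m ≥ 0, (jN_m)² + 3·JN_{m+3}·jN_{m+3} = 4^(m+3)·(1 + 4i + 8j + 16k) in the dual quaternion algebra. -/
noncomputable section

lemma hVp (n : ℕ) : V3 (n + 3) = V3 n := by simp [V3, Nat.add_mod_right]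
lemma hVsum (n : ℕ) : V3 n + V3 (n+1) + V3 (n+2) = 0 := by
  have h : n % 3 = 0 ∧ (n+1) % 3 = 1 ∧ (n+2) % 3 = 2 ∨
      n % 3 = 1 ∧ (n+1) % 3 = 2 ∧ (n+2) % 3 = 0 ∨
      n % 3 = 2 ∧ (n+1) % 3 = 0 ∧ (n+2) % 3 = 1 := by omega
  rcases h with ⟨a,b,c⟩|⟨a,b,c⟩|⟨a,b,c⟩ <;> simp [V3, a, b, c]

lemma hJ : ∀ n, 7 * J3 n = 2^(n+1) - V3 n := by
  intro n
  induction n using Nat.strong_induction_on with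
  | _ n ih =>
    match n with
    | 0 => simp [J3, V3]
    | 1 => norm_num [J3, V3]
    | 2 => norm_num [J3, V3]
    | k + 3 =>
      have h0 := ih k (by omega)
      have h1 := ih (k+1) (by omega)
      have h2 := ih (k+2) (by omega)
      have hs := hVsum k
      have hp := hVp k
      rw [J3]
      linear_combination h2 + h1 + 2*h0 + hp - hs

lemma hj : ∀ n, 7 * j3 n = 2^(n+3) + 3 * V3 n := by
  intro n
  induction n using Nat.strong_induction_on with
  | _ n ih =>
    match n with
    | 0 => norm_num [j3, V3]
    | 1 => norm_num [j3, V3]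
    | 2 => norm_num [j3, V3]
    | k + 3 =>
      have h0 := ih k (by omega)
      have h1 := ih (k+1) (by omega)
      have h2 := ih (k+2) (by omega)
      have hs := hVsum k
      have hp := hVp k
      rw [j3]
      linear_combination h2 + h1 + 2*h0 - 3*hp + 3*hs

lemma idA (m : ℕ) : j3 m ^ 2 + 3 * (J3 (m+3) * j3 (m+3)) = 4 ^ (m+3) := by
  have e1 := hj m
  have e2 := hJ (m+3)
  have e3 := hj (m+3)
  rw [hVp m] at e2 e3
  have h4 : (4:ℤ)^(m+3) = 2^(m+3) * 2^(m+3) := by rw [← mul_pow]; norm_num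
  apply mul_left_cancel₀ (show (49:ℤ) ≠ 0 by norm_num)
  rw [h4]
  linear_combination (7*j3 m + 2^(m+3)+3*V3 m)*e1 + 3*((7*j3 (m+3))*e2 + (2^(m+4) - V3 m)*e3)

lemma idB (m : ℕ) : 2 * (j3 m * j3 (m+1)) + 3 * (J3 (m+3) * j3 (m+4) + J3 (m+4) * j3 (m+3)) = 4 * 4 ^ (m+3) := by
  have e0 := hj m
  have e1 := hj (m+1)
  have f3 := hJ (m+3)
  have f4 := hJ (m+4)
  have g3 := hj (m+3)
  have g4 := hj (m+4)
  rw [hVp m] at f3 g3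
  rw [show m+4 = (m+1)+3 by ring, hVp (m+1)] at f4 g4
  have h4 : (4:ℤ)^(m+3) = 2^(m+3) * 2^(m+3) := by rw [← mul_pow]; norm_num
  apply mul_left_cancel₀ (show (49:ℤ) ≠ 0 by norm_num)
  rw [h4]
  linear_combination 2*((7*j3 (m+1))*e0 + (2^(m+3)+3*V3 m)*e1) + 3*((7*j3 (m+4))*f3 + (2^(m+4)-V3 m)*g4 + (7*j3 (m+3))*f4 + (2^(m+5)-V3 (m+1))*g3)

lemma idC (m : ℕ) : 2 * (j3 m * j3 (m+2)) + 3 * (J3 (m+3) * j3 (m+5) + J3 (m+5) * j3 (m+3)) = 8 * 4 ^ (m+3) := by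
  have e0 := hj m
  have e1 := hj (m+2)
  have f3 := hJ (m+3)
  have f4 := hJ (m+5)
  have g3 := hj (m+3)
  have g4 := hj (m+5)
  rw [hVp m] at f3 g3
  rw [show m+5 = (m+2)+3 by ring, hVp (m+2)] at f4 g4
  have h4 : (4:ℤ)^(m+3) = 2^(m+3) * 2^(m+3) := by rw [← mul_pow]; norm_num
  apply mul_left_cancel₀ (show (49:ℤ) ≠ 0 by norm_num)
  rw [h4]
  linear_combination 2*((7*j3 (m+2))*e0 + (2^(m+3)+3*V3 m)*e1) + 3*((7*j3 (m+5))*f3 + (2^(m+4)-V3 m)*g4 + (7*j3 (m+3))*f4 + (2^(m+6)-V3 (m+2))*g3)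

lemma idD (m : ℕ) : 2 * (j3 m * j3 (m+3)) + 3 * (J3 (m+3) * j3 (m+6) + J3 (m+6) * j3 (m+3)) = 16 * 4 ^ (m+3) := by
  have e0 := hj m
  have e1 := hj (m+3)
  have f3 := hJ (m+3)
  have f4 := hJ (m+6)
  have g3 := hj (m+3)
  have g4 := hj (m+6)
  rw [hVp m] at f3 g3 e1
  rw [show m+6 = (m+3)+3 by ring, hVp (m+3), hVp m] at f4 g4
  have h4 : (4:ℤ)^(m+3) = 2^(m+3) * 2^(m+3) := by rw [← mul_pow]; norm_num
  apply mul_left_cancel₀ (show (49:ℤ) ≠ 0 by norm_num)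
  rw [h4]
  linear_combination 2*((7*j3 (m+3))*e0 + (2^(m+3)+3*V3 m)*e1) + 3*((7*j3 (m+6))*f3 + (2^(m+4)-V3 m)*g4 + (7*j3 (m+3))*f4 + (2^(m+7)-V3 m)*g3)


theorem stmt_16 : ∀ m : ℕ,
    (jN m) ^ 2 + 3 * JN (m + 3) * jN (m + 3) =
      (4 : DualQ) ^ (m + 3) * (1 + 4 * qi + 8 * qj + 16 * qk) := by
  intro m
  have hii : qi * qi = 0 := by rw [qi]; exact TrivSqZeroExt.inr_mul_inr _ _ _
  have hjj : qj * qj = 0 := by rw [qj]; exact TrivSqZeroExt.inr_mul_inr _ _ _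
  have hkk : qk * qk = 0 := by rw [qk]; exact TrivSqZeroExt.inr_mul_inr _ _ _
  have hij : qi * qj = 0 := by rw [qi, qj]; exact TrivSqZeroExt.inr_mul_inr _ _ _
  have hik : qi * qk = 0 := by rw [qi, qk]; exact TrivSqZeroExt.inr_mul_inr _ _ _
  have hjk : qj * qk = 0 := by rw [qj, qk]; exact TrivSqZeroExt.inr_mul_inr _ _ _
  have A' : ((j3 m : ℤ) : DualQ)^2 + 3*(((J3 (m+3) : ℤ):DualQ) * ((j3 (m+3):ℤ):DualQ)) = (4:DualQ)^(m+3) := by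
    exact_mod_cast congrArg (fun z : ℤ => (z : DualQ)) (idA m)
  have B' : 2*(((j3 m:ℤ):DualQ) * ((j3 (m+1):ℤ):DualQ)) + 3*(((J3 (m+3):ℤ):DualQ) * ((j3 (m+4):ℤ):DualQ) + ((J3 (m+4):ℤ):DualQ) * ((j3 (m+3):ℤ):DualQ)) = 4*(4:DualQ)^(m+3) := by
    exact_mod_cast congrArg (fun z : ℤ => (z : DualQ)) (idB m)
  have C' : 2*(((j3 m:ℤ):DualQ) * ((j3 (m+2):ℤ):DualQ)) + 3*(((J3 (m+3):ℤ):DualQ) * ((j3 (m+5):ℤ):DualQ) + ((J3 (m+5):ℤ):DualQ) * ((j3 (m+3):ℤ):DualQ)) = 8*(4:DualQ)^(m+3) := by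
    exact_mod_cast congrArg (fun z : ℤ => (z : DualQ)) (idC m)
  have D' : 2*(((j3 m:ℤ):DualQ) * ((j3 (m+3):ℤ):DualQ)) + 3*(((J3 (m+3):ℤ):DualQ) * ((j3 (m+6):ℤ):DualQ) + ((J3 (m+6):ℤ):DualQ) * ((j3 (m+3):ℤ):DualQ)) = 16*(4:DualQ)^(m+3) := by
    exact_mod_cast congrArg (fun z : ℤ => (z : DualQ)) (idD m)
  simp only [JN, jN, show m+3+1=m+4 by omega, show m+3+2=m+5 by omega,
    show m+3+3=m+6 by omega]
  linear_combination A' + B'*qi + C'*qj + D'*qk +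
    (((j3 (m+1):ℤ):DualQ)^2 + 3*(((J3 (m+4):ℤ):DualQ)*((j3 (m+4):ℤ):DualQ)))*hii +
    (((j3 (m+2):ℤ):DualQ)^2 + 3*(((J3 (m+5):ℤ):DualQ)*((j3 (m+5):ℤ):DualQ)))*hjj +
    (((j3 (m+3):ℤ):DualQ)^2 + 3*(((J3 (m+6):ℤ):DualQ)*((j3 (m+6):ℤ):DualQ)))*hkk +
    (2*((j3 (m+1):ℤ):DualQ)*((j3 (m+2):ℤ):DualQ) + 3*(((J3 (m+4):ℤ):DualQ)*((j3 (m+5):ℤ):DualQ) + ((J3 (m+5):ℤ):DualQ)*((j3 (m+4):ℤ):DualQ)))*hij +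
    (2*((j3 (m+1):ℤ):DualQ)*((j3 (m+3):ℤ):DualQ) + 3*(((J3 (m+4):ℤ):DualQ)*((j3 (m+6):ℤ):DualQ) + ((J3 (m+6):ℤ):DualQ)*((j3 (m+4):ℤ):DualQ)))*hik +
    (2*((j3 (m+2):ℤ):DualQ)*((j3 (m+3):ℤ):DualQ) + 3*(((J3 (m+5):ℤ):DualQ)*((j3 (m+6):ℤ):DualQ) + ((J3 (m+6):ℤ):DualQ)*((j3 (m+5):ℤ):DualQ)))*hjk
end
end
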